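/- arXiv:2310.18150 — 3 statements merged into one kernel-verified Lean document; each statement's English description precedes it below -/
import Mathlib

section
/- Let V : ℝ → ℝ be V(t) = ‖s(t)‖² where s is a differentiable curve in ℝᵐ with s'(t) = z(t) - κ₁ s(t) - w(t), where ‖z(t)‖ ≤ L, sᵀ(t) w₀(t) ≥ λ ‖s(t)‖² for a decomposition w(t) = w₀(t) + w₁(t) with ‖w₁(t)‖ ≤ M. Then V'(t) < 0 whenever ‖s(t)‖ > (L + M)/λ (assuming κ₁ ≥ 0, λ > 0). -/
open scoped RealInnerProductSpace

/-- Lyapunov derivative bound: if `s' = z - κ₁ s - w` with `‖z‖ ≤ L`,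
`w = w₀ + w₁`, `⟪s, w₀⟫ ≥ λ ‖s‖²`, `‖w₁‖ ≤ M`, `κ₁ ≥ 0`, `λ > 0`, then
`V = ‖s‖²` has negative derivative whenever `‖s‖ > (L + M)/λ`. -/
theorem stmt9 {m : ℕ} (s z w w₀ w₁ : ℝ → EuclideanSpace ℝ (Fin m))
    (κ₁ lam L M : ℝ) (hκ : 0 ≤ κ₁) (hlam : 0 < lam) (hL : 0 ≤ L) (hM : 0 ≤ M)
    (hs : ∀ t, HasDerivAt s (z t - κ₁ • s t - w t) t)
    (hw : ∀ t, w t = w₀ t + w₁ t)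
    (hz : ∀ t, ‖z t‖ ≤ L)
    (hw₀ : ∀ t, lam * ‖s t‖ ^ 2 ≤ ⟪s t, w₀ t⟫)
    (hw₁ : ∀ t, ‖w₁ t‖ ≤ M) :
    ∀ t, (L + M) / lam < ‖s t‖ → deriv (fun τ => ‖s τ‖ ^ 2) t < 0 := by
  intro t ht
  set d := z t - κ₁ • s t - w t with hd
  have hVi : HasDerivAt (fun τ => ⟪s τ, s τ⟫) (⟪s t, d⟫ + ⟪d, s t⟫) t :=
    (hs t).inner ℝ (hs t)
  have hfun : (fun τ => ‖s τ‖ ^ 2) = fun τ => ⟪s τ, s τ⟫ :=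
    funext fun τ => (real_inner_self_eq_norm_sq (s τ)).symm
  rw [hfun, hVi.deriv, real_inner_comm (s t) d]
  have hexp : ⟪s t, d⟫ = ⟪s t, z t⟫ - κ₁ * ‖s t‖ ^ 2 - ⟪s t, w₀ t⟫ - ⟪s t, w₁ t⟫ := by
    rw [hd, hw t, inner_sub_right, inner_sub_right, inner_add_right,
      real_inner_smul_right, real_inner_self_eq_norm_sq]
    ring
  rw [hexp]

  have h1 : ⟪s t, z t⟫ ≤ L * ‖s t‖ := by
    calc ⟪s t, z t⟫ ≤ ‖s t‖ * ‖z t‖ := real_inner_le_norm _ _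
      _ ≤ ‖s t‖ * L := by nlinarith [norm_nonneg (s t), hz t]
      _ = L * ‖s t‖ := by ring
  have h2 : -⟪s t, w₁ t⟫ ≤ M * ‖s t‖ := by
    have := real_inner_le_norm (s t) (-(w₁ t))
    simp only [inner_neg_right] at this
    nlinarith [norm_nonneg (s t), hw₁ t, norm_neg (w₁ t)]
  have hspos : 0 < ‖s t‖ := lt_of_le_of_lt (by positivity) ht
  have hkey : L + M < lam * ‖s t‖ := by
    rw [div_lt_iff₀ hlam] at ht; linarith
  have h3 : lam * ‖s t‖ ^ 2 ≤ ⟪s t, w₀ t⟫ := hw₀ t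
  have hκs : 0 ≤ κ₁ * ‖s t‖ ^ 2 := by positivity
  nlinarith [sq_nonneg (‖s t‖)]
end

section
/- Let s : ℝ → ℝᵐ be continuously differentiable and suppose there exist c > 0 and R ≥ 0 such that d/dt ‖s(t)‖² ≤ -c ‖s(t)‖² whenever ‖s(t)‖ > R. Then for every ε > 0 there exists T ≥ 0 such that ‖s(t)‖ ≤ R + ε for all t ≥ T (an ultimate boundedness / practical stability result). -/
/-- Ultimate boundedness: if `s` is `C¹` and `d/dt ‖s‖² ≤ -c ‖s‖²` whenever
`‖s‖ > R`, then for every `ε > 0` there is `T ≥ 0` with `‖s t‖ ≤ R + ε` for all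
`t ≥ T`. -/
theorem stmt10 {m : ℕ} (s : ℝ → EuclideanSpace ℝ (Fin m)) (c R : ℝ)
    (hc : 0 < c) (hR : 0 ≤ R) (hs : ContDiff ℝ 1 s)
    (hineq : ∀ t ≥ (0:ℝ), R < ‖s t‖ →
      deriv (fun τ => ‖s τ‖ ^ 2) t ≤ -c * ‖s t‖ ^ 2) :
    ∀ ε > (0:ℝ), ∃ T ≥ (0:ℝ), ∀ t ≥ T, ‖s t‖ ≤ R + ε := by
  intro ε hε
  set V : ℝ → ℝ := fun τ => ‖s τ‖ ^ 2 with hVdef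
  have hVd : Differentiable ℝ V := (hs.norm_sq ℝ).differentiable one_ne_zero
  have hVcont : Continuous V := hVd.continuous
  have hVnonneg : ∀ t, 0 ≤ V t := fun t => by positivity
  set B : ℝ := (R + ε) ^ 2 with hBdef
  have hB : 0 < B := by positivity
  have hcB : 0 < c * B := mul_pos hc hB
  -- key decrease lemma
  have dec : ∀ a b : ℝ, 0 ≤ a → a ≤ b → (∀ t ∈ Set.Ioo a b, B < V t) →
      V b ≤ V a - (c * B) * (b - a) := by
    intro a b ha hab hgt
    set g : ℝ → ℝ := fun t => V t + (c * B) * t with hgdef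
    have hgd : Differentiable ℝ g := hVd.add (differentiable_const _ |>.mul differentiable_id)
    have hanti : AntitoneOn g (Set.Icc a b) := by
      apply antitoneOn_of_deriv_nonpos (convex_Icc a b) hgd.continuous.continuousOn
        (hgd.differentiableOn.mono interior_subset)
      intro t ht
      rw [interior_Icc] at ht
      have hgderiv : deriv g t = deriv V t + c * B := by
        have h1 : HasDerivAt g (deriv V t + c * B * 1) t :=
          (hVd t).hasDerivAt.add ((hasDerivAt_id t).const_mul (c * B))
        simpa using h1.deriv
      rw [hgderiv]
      have hVt : B < V t := hgt t ht
      have hVt' : (R + ε) ^ 2 < ‖s t‖ ^ 2 := hVt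
      have hnorm : R + ε < ‖s t‖ :=
        lt_of_pow_lt_pow_left₀ 2 (norm_nonneg _) hVt'
      have hR' : R < ‖s t‖ := lt_of_le_of_lt (by linarith) hnorm
      have ht0 : (0:ℝ) ≤ t := le_trans ha ht.1.le
      have hderivV : deriv V t ≤ -c * ‖s t‖ ^ 2 := hineq t ht0 hR'
      nlinarith [hc.le]
    have h2 := hanti (Set.left_mem_Icc.2 hab) (Set.right_mem_Icc.2 hab) hab
    simp only [hgdef] at h2
    linarith
  -- Step 1: there is a time where V ≤ B
  have step1 : ∃ T ≥ (0:ℝ), V T ≤ B := by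
    by_contra h
    push_neg at h
    set t1 : ℝ := V 0 / (c * B) + 1 with ht1def
    have ht1 : 0 ≤ t1 := by positivity
    have hdec := dec 0 t1 le_rfl ht1 (fun t ht => h t ht.1.le)
    have heq : c * B * t1 = V 0 + c * B := by
      rw [ht1def]; field_simp
    nlinarith [hVnonneg t1]
  obtain ⟨T, hT0, hTB⟩ := step1
  refine ⟨T, hT0, fun t ht => ?_⟩
  -- Step 2: invariance
  have hVtB : V t ≤ B := by
    by_contra hVt
    push_neg at hVt
    set S : Set ℝ := {u | u ∈ Set.Icc T t ∧ V u ≤ B} with hSdef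
    have hScl : IsClosed S := by
      have hSeq : S = Set.Icc T t ∩ V ⁻¹' (Set.Iic B) := by
        ext u; simp [hSdef, Set.mem_Icc]
      rw [hSeq]
      exact isClosed_Icc.inter (isClosed_Iic.preimage hVcont)
    have hSne : S.Nonempty := ⟨T, ⟨Set.left_mem_Icc.2 ht, hTB⟩⟩
    have hSbdd : BddAbove S := ⟨t, fun u hu => hu.1.2⟩
    set t0 : ℝ := sSup S with ht0def
    have ht0S : t0 ∈ S := hScl.csSup_mem hSne hSbdd
    have ht0le : t0 ≤ t := ht0S.1.2
    have ht0lt : t0 < t := lt_of_le_of_ne ht0le (by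
      intro heq
      exact absurd (heq ▸ ht0S.2) (not_le.2 hVt))
    have ht00 : (0:ℝ) ≤ t0 := le_trans hT0 ht0S.1.1
    have hgt : ∀ u ∈ Set.Ioo t0 t, B < V u := by
      intro u hu
      by_contra hVu
      push_neg at hVu
      have huS : u ∈ S := ⟨⟨le_trans ht0S.1.1 hu.1.le, hu.2.le⟩, hVu⟩
      exact absurd (le_csSup hSbdd huS) (not_le.2 hu.1)
    have hdec := dec t0 t ht00 ht0le hgt
    nlinarith [ht0S.2, mul_pos hcB (sub_pos.2 ht0lt)]
  have hVt' : ‖s t‖ ^ 2 ≤ (R + ε) ^ 2 := hVtB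
  have : 0 ≤ R + ε := by linarith
  nlinarith [norm_nonneg (s t)]
end

section
/- Let G be a connected graph on N vertices with Laplacian Q, H = I - (1/N)𝟙𝟙ᵀ, and suppose s̃ : ℝ → ℝᴺ satisfies s̃'(t) = z̃(t) - κ₁ s̃(t) - κ₂ Q s̃(t) - d(t) with Hs̃(t) = s̃(t) (i.e., s̃ ⊥ 𝟙), ‖z̃(t)‖ ≤ L', ‖d(t)‖ ≤ D. Then d/dt ‖s̃(t)‖² ≤ 2‖s̃(t)‖ (L' + D - κ₂ λ₂ ‖s̃(t)‖) where λ₂ > 0 is the algebraic connectivity; consequently ‖s̃(t)‖ eventually satisfies ‖s̃(t)‖ ≤ (L' + D)/(κ₂ λ₂) + ε for any ε > 0. -/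
open Matrix

open scoped RealInnerProductSpace

/-- Consensus-error dynamics: if `s̃' = z̃ - κ₁ s̃ - κ₂ Q s̃ - d` with `s̃ ⊥ 𝟙`,
`‖z̃‖ ≤ L'`, `‖d‖ ≤ D`, and `Q` a Laplacian with algebraic connectivity `λ₂ > 0`,
then `d/dt ‖s̃‖² ≤ 2‖s̃‖ (L' + D - κ₂ λ₂ ‖s̃‖)`, and consequently `‖s̃ t‖` is
ultimately bounded by `(L' + D)/(κ₂ λ₂) + ε` for any `ε > 0`. -/
theorem stmt16 {N : ℕ} (Q : Matrix (Fin N) (Fin N) ℝ) (hQsym : Q.IsSymm)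
    (hQ1 : Q *ᵥ (fun _ => (1:ℝ)) = 0)
    (lam2 : ℝ) (hlam2 : 0 < lam2)
    (hQgap : ∀ v : EuclideanSpace ℝ (Fin N), (∑ i, v i) = 0 →
      lam2 * ‖v‖ ^ 2 ≤ ⟪v, Matrix.toEuclideanLin Q v⟫)
    (κ₁ κ₂ L' D : ℝ) (hκ₁ : 0 ≤ κ₁) (hκ₂ : 0 < κ₂) (hL : 0 ≤ L') (hD : 0 ≤ D)
    (stil ztil d : ℝ → EuclideanSpace ℝ (Fin N))
    (hperp : ∀ t, (∑ i, stil t i) = 0)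
    (hz : ∀ t, ‖ztil t‖ ≤ L') (hd : ∀ t, ‖d t‖ ≤ D)
    (hderiv : ∀ t, HasDerivAt stil
      (ztil t - κ₁ • stil t - κ₂ • (Matrix.toEuclideanLin Q (stil t)) - d t) t) :
    (∀ t, deriv (fun τ => ‖stil τ‖ ^ 2) t ≤
        2 * ‖stil t‖ * (L' + D - κ₂ * lam2 * ‖stil t‖)) ∧
    ∀ ε > (0:ℝ), ∃ T, ∀ t ≥ T, ‖stil t‖ ≤ (L' + D) / (κ₂ * lam2) + ε := by
  set V : ℝ → ℝ := fun τ => ‖stil τ‖ ^ 2 with hVdef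
  set rhs : ℝ → EuclideanSpace ℝ (Fin N) :=
    fun t => ztil t - κ₁ • stil t - κ₂ • (Matrix.toEuclideanLin Q (stil t)) - d t with hrhs
  have hVderiv : ∀ t, HasDerivAt V (2 * ⟪stil t, rhs t⟫) t := by
    intro t
    have h2 := (hderiv t).inner (𝕜 := ℝ) (hderiv t)
    have hf : (fun τ => ⟪stil τ, stil τ⟫) = V :=
      funext fun τ => real_inner_self_eq_norm_sq _
    rw [hf] at h2
    convert h2 using 1
    · rfl
    · rfl
    rw [real_inner_comm]; ring
  have part1 : ∀ t, deriv V t ≤ 2 * ‖stil t‖ * (L' + D - κ₂ * lam2 * ‖stil t‖) := by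
    intro t
    rw [(hVderiv t).deriv]
    have hexp : ⟪stil t, rhs t⟫ = ⟪stil t, ztil t⟫ - κ₁ * ⟪stil t, stil t⟫
        - κ₂ * ⟪stil t, Matrix.toEuclideanLin Q (stil t)⟫ - ⟪stil t, d t⟫ := by
      simp [hrhs, inner_sub_right, inner_smul_right]
    have h1 : ⟪stil t, ztil t⟫ ≤ ‖stil t‖ * L' :=
      le_trans (real_inner_le_norm _ _)
        (mul_le_mul_of_nonneg_left (hz t) (norm_nonneg _))
    have h2 : -⟪stil t, d t⟫ ≤ ‖stil t‖ * D := by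
      have := abs_real_inner_le_norm (stil t) (d t)
      have h' := (abs_le.mp this).1
      have : ‖stil t‖ * ‖d t‖ ≤ ‖stil t‖ * D :=
        mul_le_mul_of_nonneg_left (hd t) (norm_nonneg _)
      linarith
    have h3 : lam2 * ‖stil t‖ ^ 2 ≤ ⟪stil t, Matrix.toEuclideanLin Q (stil t)⟫ :=
      hQgap (stil t) (hperp t)
    have h4 : (0:ℝ) ≤ κ₁ * ⟪stil t, stil t⟫ := by
      rw [real_inner_self_eq_norm_sq]; positivity
    rw [hexp]
    nlinarith [norm_nonneg (stil t), mul_le_mul_of_nonneg_left h3 hκ₂.le]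
  refine ⟨part1, ?_⟩
  intro ε hε
  have hkl : (0:ℝ) < κ₂ * lam2 := mul_pos hκ₂ hlam2
  set B := (L' + D) / (κ₂ * lam2) + ε with hB
  have hBpos : 0 < B := by positivity
  set c := 2 * B * ((κ₂ * lam2) * ε) with hc
  have hcpos : 0 < c := by positivity
  have hdec : ∀ t, B ≤ ‖stil t‖ → deriv V t ≤ -c := by
    intro t ht
    have h1 := part1 t
    have hBexp : κ₂ * lam2 * B = (L' + D) + κ₂ * lam2 * ε := by
      rw [hB]; field_simp
    have h2 : L' + D - κ₂ * lam2 * ‖stil t‖ ≤ -((κ₂ * lam2) * ε) := by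
      have := mul_le_mul_of_nonneg_left ht hkl.le
      linarith
    have hs : 0 ≤ ‖stil t‖ - B := sub_nonneg.2 ht
    have hko : (0:ℝ) < κ₂ * lam2 * ε := by positivity
    have hP : (0:ℝ) ≤ -(L' + D - κ₂ * lam2 * ‖stil t‖) := by linarith
    have e1 : 2 * ‖stil t‖ * (L' + D - κ₂ * lam2 * ‖stil t‖) ≤
        2 * B * (L' + D - κ₂ * lam2 * ‖stil t‖) := by nlinarith [mul_nonneg hs hP]
    have e2 : 2 * B * (L' + D - κ₂ * lam2 * ‖stil t‖) ≤ 2 * B * (-(κ₂ * lam2 * ε)) := by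
      nlinarith [hBpos, h2]
    have : c = 2 * B * (κ₂ * lam2 * ε) := hc
    linarith
  have hVdiff : Differentiable ℝ V := fun t => (hVderiv t).differentiableAt
  have hVcont : Continuous V := hVdiff.continuous
  have hsdiff : Differentiable ℝ stil := fun t => (hderiv t).differentiableAt
  have hscont : Continuous fun t => ‖stil t‖ := hsdiff.continuous.norm
  have hdrop : ∀ a b : ℝ, a ≤ b → (∀ t ∈ Set.Icc a b, B ≤ ‖stil t‖) →
      V b + c * b ≤ V a + c * a := by
    intro a b hab hIcc
    have hanti : AntitoneOn (fun t => V t + c * t) (Set.Icc a b) := by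
      apply antitoneOn_of_deriv_nonpos (convex_Icc a b)
      · exact (hVcont.add (continuous_const.mul continuous_id)).continuousOn
      · intro x _
        exact (hVdiff x).add ((differentiable_id.const_mul c) x) |>.differentiableWithinAt
      · intro x hx
        have hx' : x ∈ Set.Icc a b := interior_subset hx
        have hcx : HasDerivAt (fun t : ℝ => c * t) c x := by
          simpa using (hasDerivAt_id x).const_mul c
        have hdx : HasDerivAt (fun t => V t + c * t) (deriv V x + c) x :=
          (hVdiff x).hasDerivAt.add hcx
        rw [hdx.deriv]
        have := hdec x (hIcc x hx')
        linarith
    exact hanti (Set.left_mem_Icc.2 hab) (Set.right_mem_Icc.2 hab) hab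
  have hex : ∃ T, ‖stil T‖ ≤ B := by
    by_contra h
    push_neg at h
    set T0 := V 0 / c + 1 with hT0def
    have hV0 : 0 ≤ V 0 := sq_nonneg _
    have hT0 : (0:ℝ) ≤ T0 := by positivity
    have hdropped := hdrop 0 T0 hT0 (fun t _ => (h t).le)
    have hcT0 : c * T0 = V 0 + c := by
      rw [hT0def]; field_simp
    have hVT0 : 0 ≤ V T0 := sq_nonneg _
    simp only [mul_zero] at hdropped
    linarith
  obtain ⟨T, hT⟩ := hex
  refine ⟨T, fun t₁ ht₁ => ?_⟩
  by_contra hgt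
  push_neg at hgt
  set S := Set.Icc T t₁ ∩ {t | ‖stil t‖ ≤ B} with hS
  have hScl : IsClosed S := isClosed_Icc.inter (isClosed_le hscont continuous_const)
  have hSne : S.Nonempty := ⟨T, ⟨Set.left_mem_Icc.2 ht₁, hT⟩⟩
  have hSbdd : BddAbove S := ⟨t₁, fun x hx => hx.1.2⟩
  set t' := sSup S with ht'
  have ht'mem : t' ∈ S := hScl.csSup_mem hSne hSbdd
  have ht'lt : t' < t₁ :=
    lt_of_le_of_ne ht'mem.1.2 (fun h => hgt.not_ge (h ▸ ht'mem.2))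
  have hmid : ∀ t ∈ Set.Ioc t' t₁, B < ‖stil t‖ := by
    intro t ht
    by_contra hle
    push_neg at hle
    have hmem : t ∈ S := ⟨⟨le_trans ht'mem.1.1 ht.1.le, ht.2⟩, hle⟩
    exact absurd (le_csSup hSbdd hmem) (not_le.2 ht.1)
  have ht'B : B ≤ ‖stil t'‖ := by
    have hmemIoc : Set.Ioc t' t₁ ∈ nhdsWithin t' (Set.Ioi t') :=
      Ioc_mem_nhdsGT_of_mem ⟨le_refl t', ht'lt⟩
    have htend : Filter.Tendsto (fun t => ‖stil t‖) (nhdsWithin t' (Set.Ioi t'))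
        (nhds ‖stil t'‖) :=
      (hscont.continuousAt).continuousWithinAt.tendsto
    exact ge_of_tendsto htend
      (Filter.eventually_of_mem hmemIoc fun t ht => (hmid t ht).le)
  have hall : ∀ t ∈ Set.Icc t' t₁, B ≤ ‖stil t‖ := by
    intro t ht
    rcases eq_or_lt_of_le ht.1 with h | h
    · exact h ▸ ht'B
    · exact (hmid t ⟨h, ht.2⟩).le
  have hdropped := hdrop t' t₁ ht'lt.le hall
  have hVt1 : B ^ 2 < V t₁ :=
    pow_lt_pow_left₀ hgt hBpos.le (by norm_num)
  have hVt' : V t' ≤ B ^ 2 :=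
    pow_le_pow_left₀ (norm_nonneg (stil t')) ht'mem.2 2
  have h5 : 0 < c * t₁ - c * t' := by
    have h6 := mul_pos hcpos (sub_pos.2 ht'lt)
    linarith [mul_sub c t₁ t']
  linarith
end
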